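/- Let y ∈ ℝⁿ, X ∈ ℝ^{n×p}, λ > 0, let r be any norm on ℝ^p, and let w ∈ ℝ^p satisfy w₁ ≥ w₂ ≥ ⋯ ≥ w_p ≥ 0 with w₁ > 0. Define the uncertainty set U_w^λ = {Δ ∈ ℝ^{n×p} : ‖Δφ‖₂ ≤ λ Σ_{i=1}^p wᵢ |φ_(i)| for all φ ∈ ℝ^p}. Then the problem min over β of (min over Δ ∈ U_w^λ of ‖y − (X + Δ)β‖₂) + r(β) has the same optimal value and the same set of optimal solutions as the constrained problem: minimize ‖y − Xβ‖₂ + r(β) − λ R_SLOPE(w)(β) over β ∈ ℝ^p subject to λ R_SLOPE(w)(β) ≤ ‖y − Xβ‖₂. -/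

import Mathlib

open Finset

/-- Absolute values of the entries of `β`, sorted in increasing order. -/
noncomputable def sortAbs {p : ℕ} (β : Fin p → ℝ) : Fin p → ℝ :=
  fun i => |β (Tuple.sort (fun j => |β j|) i)|

/-- `|β_(i)|`: absolute values of the entries of `β` sorted in decreasing
order (`descAbs β i = |β_(i+1)|`). -/
noncomputable def descAbs {p : ℕ} (β : Fin p → ℝ) : Fin p → ℝ :=
  fun i => sortAbs β i.rev

/-- The SLOPE penalty `R_SLOPE(w)(β) = ∑_{i=1}^p w_i |β_(i)|`. -/
noncomputable def slopePen {p : ℕ} (w : Fin p → ℝ) (β : Fin p → ℝ) : ℝ :=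
  ∑ i, w i * descAbs β i

/-- The Euclidean norm of a vector. -/
noncomputable def norm2 {m : ℕ} (v : Fin m → ℝ) : ℝ := Real.sqrt (∑ i, v i ^ 2)

/-- The uncertainty set `U_w^λ = {Δ : ‖Δφ‖₂ ≤ λ R_SLOPE(w)(φ) for all φ}`. -/
def slopeUnc {n p : ℕ} (w : Fin p → ℝ) (lam : ℝ) : Set (Matrix (Fin n) (Fin p) ℝ) :=
  {Δ | ∀ φ : Fin p → ℝ, norm2 (Δ.mulVec φ) ≤ lam * slopePen w φ}

/-- The min-min robust objective
`β ↦ (min_{Δ ∈ U_w^λ} ‖y - (X+Δ)β‖₂) + r(β)`. -/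
noncomputable def minminObj {n p : ℕ} (y : Fin n → ℝ) (X : Matrix (Fin n) (Fin p) ℝ)
    (w : Fin p → ℝ) (lam : ℝ) (r : (Fin p → ℝ) → ℝ) (β : Fin p → ℝ) : ℝ :=
  sInf {v : ℝ | ∃ Δ ∈ slopeUnc (n := n) (p := p) w lam,
    v = norm2 (y - (X + Δ).mulVec β)} + r β

lemma norm2_eq_norm {m : ℕ} (v : Fin m → ℝ) :
    norm2 v = ‖(WithLp.equiv 2 (Fin m → ℝ)).symm v‖ := by
  rw [EuclideanSpace.norm_eq]
  simp [norm2, sq_abs]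

lemma norm2_nonneg {m : ℕ} (v : Fin m → ℝ) : 0 ≤ norm2 v := Real.sqrt_nonneg _

lemma norm2_smul {m : ℕ} (c : ℝ) (v : Fin m → ℝ) : norm2 (c • v) = |c| * norm2 v := by
  rw [norm2_eq_norm, norm2_eq_norm]
  have : (WithLp.equiv 2 (Fin m → ℝ)).symm (c • v) = c • (WithLp.equiv 2 (Fin m → ℝ)).symm v := rfl
  rw [this, norm_smul, Real.norm_eq_abs]

lemma norm2_sub_norm2_le {m : ℕ} (a b : Fin m → ℝ) : norm2 a - norm2 b ≤ norm2 (a - b) := by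
  rw [norm2_eq_norm, norm2_eq_norm, norm2_eq_norm]
  have : (WithLp.equiv 2 (Fin m → ℝ)).symm (a - b)
      = (WithLp.equiv 2 (Fin m → ℝ)).symm a - (WithLp.equiv 2 (Fin m → ℝ)).symm b := rfl
  rw [this]
  exact norm_sub_norm_le _ _

lemma slopePen_eq_rev {p : ℕ} (w β : Fin p → ℝ) :
    slopePen w β = ∑ i, w i.rev * sortAbs β i := by
  rw [slopePen]
  exact Fintype.sum_equiv Fin.revPerm _ _ (fun i => by simp [descAbs, Fin.revPerm])

lemma slopePen_exists_perm {p : ℕ} (w β : Fin p → ℝ) :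
    ∃ π : Equiv.Perm (Fin p), slopePen w β = ∑ j, w (π j) * |β j| := by
  set σ := Tuple.sort (fun j => |β j|) with hσ
  refine ⟨σ.symm.trans Fin.revPerm, ?_⟩
  rw [slopePen_eq_rev]
  refine Fintype.sum_equiv σ _ _ (fun i => ?_)
  simp only [Equiv.trans_apply, Equiv.symm_apply_apply, Fin.revPerm_apply]
  rw [sortAbs]

lemma slopePen_perm_le {p : ℕ} {w : Fin p → ℝ}
    (hw_anti : ∀ i j : Fin p, i ≤ j → w j ≤ w i) (φ : Fin p → ℝ)
    (π : Equiv.Perm (Fin p)) :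
    ∑ j, w (π j) * |φ j| ≤ slopePen w φ := by
  set τ := Tuple.sort (fun j => |φ j|) with hτ
  have ha : Monotone (sortAbs φ) := Tuple.monotone_sort (fun j => |φ j|)
  have hf : Monotone (fun i : Fin p => w i.rev) := by
    intro i j hij
    exact hw_anti _ _ (Fin.rev_le_rev.mpr hij)
  have hmono : Monovary (fun i : Fin p => w i.rev) (sortAbs φ) :=
    hf.monovary ha
  have key := hmono.sum_comp_perm_mul_le_sum_mul (σ := (τ.trans π).trans Fin.revPerm)
  rw [← slopePen_eq_rev] at key
  refine le_trans (le_of_eq ?_) key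
  refine (Fintype.sum_equiv τ _ _ (fun i => ?_)).symm
  simp only [Equiv.trans_apply, Fin.revPerm_apply, Fin.rev_rev]
  rw [sortAbs]

lemma slopePen_nonneg {p : ℕ} {w : Fin p → ℝ} (hw : ∀ i, 0 ≤ w i) (β : Fin p → ℝ) :
    0 ≤ slopePen w β :=
  Finset.sum_nonneg fun i _ => mul_nonneg (hw i) (abs_nonneg _)

lemma slopePen_zero {p : ℕ} (w : Fin p → ℝ) : slopePen w 0 = 0 := by
  simp [slopePen, descAbs, sortAbs]

lemma slopePen_smul {p : ℕ} {w : Fin p → ℝ}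
    (hw_anti : ∀ i j : Fin p, i ≤ j → w j ≤ w i) (c : ℝ) (β : Fin p → ℝ) :
    slopePen w (c • β) = |c| * slopePen w β := by
  obtain ⟨π, hπ⟩ := slopePen_exists_perm w (c • β)
  obtain ⟨π', hπ'⟩ := slopePen_exists_perm w β
  apply le_antisymm
  · rw [hπ]
    calc ∑ j, w (π j) * |(c • β) j| = |c| * ∑ j, w (π j) * |β j| := by
          rw [Finset.mul_sum]; congr 1; ext j
          simp [abs_mul]; ring
      _ ≤ |c| * slopePen w β :=
          mul_le_mul_of_nonneg_left (slopePen_perm_le hw_anti β π) (abs_nonneg c)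
  · calc |c| * slopePen w β = ∑ j, w (π' j) * |(c • β) j| := by
          rw [hπ', Finset.mul_sum]; congr 1; ext j
          simp [abs_mul]; ring
      _ ≤ slopePen w (c • β) := slopePen_perm_le hw_anti (c • β) π'

lemma slopePen_subgrad {p : ℕ} {w : Fin p → ℝ}
    (hw_anti : ∀ i j : Fin p, i ≤ j → w j ≤ w i) (hw_nonneg : ∀ i, 0 ≤ w i)
    (β : Fin p → ℝ) :
    ∃ g : Fin p → ℝ, (∑ j, g j * β j = slopePen w β) ∧
      ∀ φ : Fin p → ℝ, |∑ j, g j * φ j| ≤ slopePen w φ := by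
  obtain ⟨π, hπ⟩ := slopePen_exists_perm w β
  refine ⟨fun j => w (π j) * (if β j < 0 then -1 else 1), ?_, ?_⟩
  · rw [hπ]
    refine Finset.sum_congr rfl fun j _ => ?_
    by_cases h : β j < 0
    · simp only [if_pos h, abs_of_neg h]; ring
    · simp only [if_neg h, abs_of_nonneg (not_lt.mp h)]; ring
  · intro φ
    calc |∑ j, w (π j) * (if β j < 0 then -1 else 1) * φ j|
        ≤ ∑ j, |w (π j) * (if β j < 0 then -1 else 1) * φ j| := Finset.abs_sum_le_sum_abs _ _
      _ = ∑ j, w (π j) * |φ j| := by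
          refine Finset.sum_congr rfl fun j _ => ?_
          rw [abs_mul, abs_mul, abs_of_nonneg (hw_nonneg (π j))]
          by_cases h : β j < 0 <;> simp [h]
      _ ≤ slopePen w φ := slopePen_perm_le hw_anti φ π

lemma rankone_mulVec {n p : ℕ} (u : Fin n → ℝ) (g : Fin p → ℝ) (φ : Fin p → ℝ) :
    (Matrix.of fun i j => g j * u i).mulVec φ = (∑ j, g j * φ j) • u := by
  ext i
  simp [Matrix.mulVec, dotProduct, Finset.sum_mul]
  exact Finset.sum_congr rfl fun j _ => by ring

lemma inner_inf {n p : ℕ} (y : Fin n → ℝ) (X : Matrix (Fin n) (Fin p) ℝ)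
    {w : Fin p → ℝ} {lam : ℝ} (hlam : 0 < lam)
    (hw_anti : ∀ i j : Fin p, i ≤ j → w j ≤ w i) (hw_nonneg : ∀ i, 0 ≤ w i)
    (β : Fin p → ℝ) :
    sInf {v : ℝ | ∃ Δ ∈ slopeUnc (n := n) (p := p) w lam,
        v = norm2 (y - (X + Δ).mulVec β)}
      = max (norm2 (y - X.mulVec β) - lam * slopePen w β) 0 := by
  set z := y - X.mulVec β with hz
  set N := norm2 z with hN
  set ρ := lam * slopePen w β with hρ
  have hres : ∀ Δ : Matrix (Fin n) (Fin p) ℝ,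
      y - (X + Δ).mulVec β = z - Δ.mulVec β := by
    intro Δ
    rw [Matrix.add_mulVec, hz]
    abel
  have hN0 : 0 ≤ N := norm2_nonneg z
  have hρ0 : 0 ≤ ρ := mul_nonneg hlam.le (slopePen_nonneg hw_nonneg β)
  have hlb : ∀ v ∈ {v : ℝ | ∃ Δ ∈ slopeUnc (n := n) (p := p) w lam,
      v = norm2 (y - (X + Δ).mulVec β)}, max (N - ρ) 0 ≤ v := by
    rintro v ⟨Δ, hΔ, rfl⟩
    rw [hres Δ]
    refine max_le ?_ (norm2_nonneg _)
    calc N - ρ ≤ N - norm2 (Δ.mulVec β) := by linarith [hΔ β]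
      _ ≤ norm2 (z - Δ.mulVec β) := norm2_sub_norm2_le z _
  have hmem : max (N - ρ) 0 ∈ {v : ℝ | ∃ Δ ∈ slopeUnc (n := n) (p := p) w lam,
      v = norm2 (y - (X + Δ).mulVec β)} := by
    rcases eq_or_lt_of_le hρ0 with h0 | hρpos
    · refine ⟨0, fun φ => ?_, ?_⟩
      · rw [Matrix.zero_mulVec]
        have : norm2 (0 : Fin n → ℝ) = 0 := by
          have := norm2_smul (0 : ℝ) (0 : Fin n → ℝ)
          simpa using this
        rw [this]
        exact mul_nonneg hlam.le (slopePen_nonneg hw_nonneg φ)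
      · rw [hres 0, Matrix.zero_mulVec, sub_zero, ← hN]
        rw [max_eq_left (by linarith)]
        linarith
    · obtain ⟨g, hg1, hg2⟩ := slopePen_subgrad hw_anti hw_nonneg β
      set t := max N ρ with ht
      have htpos : 0 < t := lt_of_lt_of_le hρpos (le_max_right _ _)
      have hNt : N ≤ t := le_max_left _ _
      have hρt : ρ ≤ t := le_max_right _ _
      refine ⟨Matrix.of fun i j => (lam * g j / t) * z i, fun φ => ?_, ?_⟩
      · rw [show (Matrix.of fun i j => (lam * g j / t) * z i)
            = Matrix.of fun i j => (lam * g j / t) * z i from rfl]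
        rw [rankone_mulVec z (fun j => lam * g j / t) φ]
        rw [norm2_smul]
        have hsum : (∑ j, lam * g j / t * φ j) = (lam / t) * ∑ j, g j * φ j := by
          rw [Finset.mul_sum]
          exact Finset.sum_congr rfl fun j _ => by ring
        rw [hsum, abs_mul, abs_of_nonneg (by positivity : (0:ℝ) ≤ lam / t)]
        calc lam / t * |∑ j, g j * φ j| * N
            ≤ lam / t * slopePen w φ * N := by
              have h1 : (0:ℝ) ≤ lam / t := by positivity
              exact mul_le_mul_of_nonneg_right
                (mul_le_mul_of_nonneg_left (hg2 φ) h1) hN0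
          _ = lam * slopePen w φ * (N / t) := by ring
          _ ≤ lam * slopePen w φ * 1 := by
              have h2 : 0 ≤ lam * slopePen w φ :=
                mul_nonneg hlam.le (slopePen_nonneg hw_nonneg φ)
              have : N / t ≤ 1 := (div_le_one htpos).mpr hNt
              nlinarith
          _ = lam * slopePen w φ := mul_one _
      · rw [hres, rankone_mulVec z (fun j => lam * g j / t) β]
        have hsum : (∑ j, lam * g j / t * β j) = ρ / t := by
          have h2 : (∑ j, lam * g j / t * β j) = (lam / t) * ∑ j, g j * β j := by
            rw [Finset.mul_sum]
            exact Finset.sum_congr rfl fun j _ => by ring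
          rw [h2, hg1, hρ]; ring
        rw [hsum]
        have : z - (ρ / t) • z = (1 - ρ / t) • z := by
          rw [sub_smul, one_smul]
        rw [this, norm2_smul, ← hN]
        rw [abs_of_nonneg (by rw [sub_nonneg]; exact (div_le_one htpos).mpr hρt)]
        rcases le_total N ρ with hc | hc
        · have : t = ρ := max_eq_right hc
          rw [this, max_eq_right (by linarith)]
          field_simp
          ring
        · have hteq : t = N := max_eq_left hc
          rw [hteq, max_eq_left (by linarith)]
          rcases eq_or_lt_of_le hN0 with hN00 | hNpos
          · linarith
          · field_simp
  apply le_antisymm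
  · exact csInf_le ⟨0, fun v hv => le_trans (le_max_right _ _) (hlb v hv)⟩ hmem
  · exact le_csInf ⟨_, hmem⟩ hlb

/-- Proposition 3.1: for any norm `r` and SLOPE weights
`w₁ ≥ ⋯ ≥ w_p ≥ 0` with `w₁ > 0`, the min-min robust problem over `U_w^λ`
has the same optimal value and the same set of optimal solutions as the
constrained problem
`min ‖y - Xβ‖₂ + r(β) - λ R_SLOPE(w)(β)  s.t.  λ R_SLOPE(w)(β) ≤ ‖y - Xβ‖₂`. -/
theorem minmin_robust_slope_as_constrained {n p : ℕ} (hp : 0 < p)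
    (y : Fin n → ℝ) (X : Matrix (Fin n) (Fin p) ℝ) (lam : ℝ) (hlam : 0 < lam)
    (w : Fin p → ℝ) (hw_anti : ∀ i j : Fin p, i ≤ j → w j ≤ w i)
    (hw_nonneg : ∀ i, 0 ≤ w i) (hw1 : 0 < w ⟨0, hp⟩)
    (r : (Fin p → ℝ) → ℝ)
    (hr_add : ∀ a b, r (a + b) ≤ r a + r b)
    (hr_smul : ∀ (c : ℝ) a, r (c • a) = |c| * r a)
    (hr_def : ∀ a, r a = 0 → a = 0) :
    sInf {v : ℝ | ∃ β : Fin p → ℝ, v = minminObj y X w lam r β} =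
      sInf {v : ℝ | ∃ β : Fin p → ℝ,
        lam * slopePen w β ≤ norm2 (y - X.mulVec β) ∧
        v = norm2 (y - X.mulVec β) + r β - lam * slopePen w β} ∧
    {β : Fin p → ℝ | ∀ β' : Fin p → ℝ,
        minminObj y X w lam r β ≤ minminObj y X w lam r β'} =
      {β : Fin p → ℝ | lam * slopePen w β ≤ norm2 (y - X.mulVec β) ∧
        ∀ β' : Fin p → ℝ, lam * slopePen w β' ≤ norm2 (y - X.mulVec β') →
          norm2 (y - X.mulVec β) + r β - lam * slopePen w β ≤
            norm2 (y - X.mulVec β') + r β' - lam * slopePen w β'} := by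
  -- abbreviations
  set N : (Fin p → ℝ) → ℝ := fun β => norm2 (y - X.mulVec β) with hNdef
  set ρ : (Fin p → ℝ) → ℝ := fun β => lam * slopePen w β with hρdef
  set F : (Fin p → ℝ) → ℝ := fun β => max (N β - ρ β) 0 + r β with hFdef
  set G : (Fin p → ℝ) → ℝ := fun β => N β + r β - ρ β with hGdef
  have hobj : ∀ β, minminObj y X w lam r β = F β := by
    intro β
    rw [minminObj, inner_inf y X hlam hw_anti hw_nonneg β]
  -- facts about r
  have r0 : r (0 : Fin p → ℝ) = 0 := by
    have h := hr_smul 0 (0 : Fin p → ℝ)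
    simpa using h
  have rnn : ∀ a : Fin p → ℝ, 0 ≤ r a := by
    intro a
    have h1 := hr_add a (-a)
    have h2 : r (-a) = r a := by
      have := hr_smul (-1) a
      simpa using this
    have h3 : a + -a = (0 : Fin p → ℝ) := by abel
    rw [h3, r0, h2] at h1
    linarith
  have hρnn : ∀ β, 0 ≤ ρ β := fun β =>
    mul_nonneg hlam.le (slopePen_nonneg hw_nonneg β)
  have hNnn : ∀ β, 0 ≤ N β := fun β => norm2_nonneg _
  have hρsmul : ∀ (t : ℝ) (β), 0 ≤ t → ρ (t • β) = t * ρ β := by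
    intro t β ht
    simp only [hρdef]
    rw [slopePen_smul hw_anti, abs_of_nonneg ht]
    ring
  have hNsmul : ∀ (t : ℝ) (β), N (t • β) = norm2 (y - t • X.mulVec β) := by
    intro t β
    simp only [hNdef, Matrix.mulVec_smul]
  -- feasibility of 0
  have hfeas0 : ρ (0 : Fin p → ℝ) ≤ N 0 := by
    have : ρ (0 : Fin p → ℝ) = 0 := by simp [hρdef, slopePen_zero]
    rw [this]; exact hNnn 0
  -- F = G on feasible set
  have hFG : ∀ β, ρ β ≤ N β → F β = G β := by
    intro β h
    simp only [hFdef, hGdef, max_eq_left (sub_nonneg.mpr h)]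
    ring
  -- scaling lemma
  have key : ∀ β : Fin p → ℝ, N β < ρ β →
      ∃ t : ℝ, 0 ≤ t ∧ t < 1 ∧ ρ (t • β) = N (t • β) := by
    intro β hβ
    set v := X.mulVec β with hv
    set h : ℝ → ℝ := fun t => norm2 (y - t • v) - t * ρ β with hh
    have hcont : Continuous h := by
      apply Continuous.sub ?_ (by fun_prop)
      unfold norm2
      apply Real.continuous_sqrt.comp
      apply continuous_finset_sum
      intro i _
      simp only [Pi.sub_apply, Pi.smul_apply, smul_eq_mul]
      fun_prop
    have h0 : 0 ≤ h 0 := by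
      simp only [hh, zero_smul, sub_zero, zero_mul]
      exact norm2_nonneg _
    have h1 : h 1 < 0 := by
      simp only [hh, one_smul, one_mul]
      have : norm2 (y - v) = N β := rfl
      rw [this]
      linarith
    have := intermediate_value_Icc' (by norm_num : (0:ℝ) ≤ 1) hcont.continuousOn
      (Set.mem_Icc.mpr ⟨h1.le, h0⟩)
    obtain ⟨t, ht, hht⟩ := this
    refine ⟨t, ht.1, ?_, ?_⟩
    · rcases lt_or_eq_of_le ht.2 with h | h
      · exact h
      · exfalso; rw [h] at hht; linarith
    · rw [hρsmul t β ht.1, hNsmul t β]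
      have hht2 : norm2 (y - t • v) - t * ρ β = 0 := hht
      linarith
  -- sets
  constructor
  · -- value equality
    set S1 := {v : ℝ | ∃ β : Fin p → ℝ, v = minminObj y X w lam r β} with hS1
    set S2 := {v : ℝ | ∃ β : Fin p → ℝ, ρ β ≤ N β ∧ v = N β + r β - ρ β} with hS2
    have hS1F : S1 = {v : ℝ | ∃ β : Fin p → ℝ, v = F β} := by
      ext v; simp only [hS1, Set.mem_setOf_eq, hobj]
    have hS1lb : ∀ v ∈ S1, (0:ℝ) ≤ v := by
      rw [hS1F]
      rintro v ⟨β, rfl⟩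
      have := rnn β
      have := le_max_right (N β - ρ β) 0
      simp only [hFdef]
      linarith
    have hsub : S2 ⊆ S1 := by
      rintro v ⟨β, hfeas, rfl⟩
      rw [hS1F]
      exact ⟨β, by rw [hFG β hfeas]⟩
    have hS2lb : ∀ v ∈ S2, (0:ℝ) ≤ v := fun v hv => hS1lb v (hsub hv)
    have hS2ne : S2.Nonempty := ⟨N 0 + r 0 - ρ 0, 0, hfeas0, rfl⟩
    apply le_antisymm
    · exact csInf_le_csInf ⟨0, hS1lb⟩ hS2ne hsub
    · refine le_csInf ⟨minminObj y X w lam r 0, 0, rfl⟩ ?_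
      rintro v ⟨β, rfl⟩
      rw [hobj]
      rcases le_or_gt (ρ β) (N β) with hfeas | hinfeas
      · refine csInf_le ⟨0, hS2lb⟩ ⟨β, hfeas, ?_⟩
        rw [hFG β hfeas]
      · obtain ⟨t, ht0, ht1, hteq⟩ := key β hinfeas
        have hmem : (N (t • β) + r (t • β) - ρ (t • β)) ∈ S2 :=
          ⟨t • β, le_of_eq hteq, rfl⟩
        refine le_trans (csInf_le ⟨0, hS2lb⟩ hmem) ?_
        have : N (t • β) + r (t • β) - ρ (t • β) = t * r β := by
          rw [hr_smul, abs_of_nonneg ht0]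
          linarith [hteq]
        rw [this]
        have hFβ : F β = r β := by
          simp only [hFdef, max_eq_right (by linarith : N β - ρ β ≤ 0)]
          ring
        rw [hFβ]
        nlinarith [rnn β]
  · -- solution set equality
    ext β
    simp only [Set.mem_setOf_eq, hobj]
    constructor
    · intro hmin
      have hfeas : ρ β ≤ N β := by
        by_contra hc
        push_neg at hc
        have hβne : β ≠ 0 := by
          intro h
          rw [h] at hc
          have : ρ (0 : Fin p → ℝ) = 0 := by simp [hρdef, slopePen_zero]
          rw [this] at hc
          exact absurd (hNnn 0) (not_le.mpr hc)
        have hrpos : 0 < r β := by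
          rcases lt_or_eq_of_le (rnn β) with h | h
          · exact h
          · exact absurd (hr_def β h.symm) hβne
        obtain ⟨t, ht0, ht1, hteq⟩ := key β hc
        have hFt : F (t • β) = t * r β := by
          simp only [hFdef]
          rw [hteq, hr_smul, abs_of_nonneg ht0]
          simp
        have hFβ : F β = r β := by
          simp only [hFdef, max_eq_right (by linarith : N β - ρ β ≤ 0)]
          ring
        have := hmin (t • β)
        rw [hFt, hFβ] at this
        nlinarith
      refine ⟨hfeas, fun β' hfeas' => ?_⟩
      have h1 := hmin β'
      rw [hFG β hfeas, hFG β' hfeas'] at h1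
      exact h1
    · rintro ⟨hfeas, hmin⟩ β'
      rcases le_or_gt (ρ β') (N β') with hfeas' | hinf'
      · rw [hFG β hfeas, hFG β' hfeas']
        exact hmin β' hfeas'
      · obtain ⟨t, ht0, ht1, hteq⟩ := key β' hinf'
        have h1 : N β + r β - ρ β ≤ N (t • β') + r (t • β') - ρ (t • β') :=
          hmin (t • β') (le_of_eq hteq)
        have hGt : N (t • β') + r (t • β') - ρ (t • β') = t * r β' := by
          rw [hr_smul, abs_of_nonneg ht0]
          linarith [hteq]
        have hFβ' : F β' = r β' := by
          simp only [hFdef, max_eq_right (by linarith : N β' - ρ β' ≤ 0)]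
          ring
        have h2 : F β = N β + r β - ρ β := hFG β hfeas
        rw [h2, hFβ']
        nlinarith [rnn β']
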